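/- Let n ≥ 3 and assume condition (ON). For any two vertices S, W of G(V), there exists a walk of length 4 from S to W in G(V) if and only if (K does not have exactly 4 elements, or n ≠ 3, or S + W is non-degenerate). -/

import Mathlib

namespace FramePaper

variable {K : Type*} [Field K]

/-- The standard Hermitian form `Ψ(v,w) = ∑ i, v i * τ (w i)` on `Fin n → K`. -/
def Psi (τ : K → K) {n : ℕ} (v w : Fin n → K) : K :=
  ∑ i, v i * τ (w i)

lemma Psi_add_left (τ : K → K) {n : ℕ} (a b w : Fin n → K) :
    Psi τ (a + b) w = Psi τ a w + Psi τ b w := by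
  simp [Psi, add_mul, Finset.sum_add_distrib]

lemma Psi_smul_left (τ : K → K) {n : ℕ} (c : K) (a w : Fin n → K) :
    Psi τ (c • a) w = c * Psi τ a w := by
  simp [Psi, Finset.mul_sum, mul_assoc]

/-- The orthogonal complement `S^⊥ = {v | ∀ s ∈ S, Ψ(v,s) = 0}`. -/
def perp (τ : K → K) {n : ℕ} (S : Submodule K (Fin n → K)) :
    Submodule K (Fin n → K) where
  carrier := {v | ∀ s ∈ S, Psi τ v s = 0}
  add_mem' := by
    intro a b ha hb
    show ∀ s ∈ S, Psi τ (a + b) s = 0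
    intro s hs
    rw [Psi_add_left, ha s hs, hb s hs, add_zero]
  zero_mem' := by
    show ∀ s ∈ S, Psi τ 0 s = 0
    intro s hs
    simp [Psi]
  smul_mem' := by
    intro c a ha
    show ∀ s ∈ S, Psi τ (c • a) s = 0
    intro s hs
    rw [Psi_smul_left, ha s hs, mul_zero]

/-- A subspace `S` is non-degenerate iff `S ⊓ S^⊥ = ⊥`. -/
def Nondeg (τ : K → K) {n : ℕ} (S : Submodule K (Fin n → K)) : Prop :=
  S ⊓ perp τ S = ⊥

/-- Vertices of `G(V)`: the `1`-dimensional non-degenerate subspaces. -/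
def IsVertex (τ : K → K) {n : ℕ} (S : Submodule K (Fin n → K)) : Prop :=
  Module.finrank K S = 1 ∧ Nondeg τ S

/-- The graph `G(V)` on the `1`-dimensional non-degenerate subspaces of `V = Fin n → K`,
with `S, W` adjacent iff `S ≠ W` and `Ψ(s,w) = 0` for all `s ∈ S`, `w ∈ W`. -/
def FrameGraph (τ : K →+* K) (hτ2 : ∀ x, τ (τ x) = x) (n : ℕ) :
    SimpleGraph {S : Submodule K (Fin n → K) // IsVertex (⇑τ) S} where
  Adj S W := S ≠ W ∧ ∀ s ∈ S.1, ∀ w ∈ W.1, Psi (⇑τ) s w = 0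
  symm := ⟨by
    rintro S W ⟨hne, h⟩
    refine ⟨hne.symm, fun w hw s hs => ?_⟩
    have key : Psi (⇑τ) w s = τ (Psi (⇑τ) s w) := by
      simp only [Psi, map_sum, map_mul, hτ2]
      exact Finset.sum_congr rfl fun i _ => mul_comm _ _
    rw [key, h s hs w hw, map_zero]⟩
  loopless := ⟨fun S h => h.1 rfl⟩

section Aux

variable (τ : K →+* K) {n : ℕ}

lemma Psi_add_right (a w w' : Fin n → K) :
    Psi (⇑τ) a (w + w') = Psi (⇑τ) a w + Psi (⇑τ) a w' := by
  simp [Psi, mul_add, Finset.sum_add_distrib]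

lemma Psi_smul_right (c : K) (a w : Fin n → K) :
    Psi (⇑τ) a (c • w) = τ c * Psi (⇑τ) a w := by
  simp only [Psi, Pi.smul_apply, smul_eq_mul, map_mul, Finset.mul_sum]
  exact Finset.sum_congr rfl fun i _ => by ring

lemma Psi_conj (hτ2 : ∀ x, τ (τ x) = x) (v w : Fin n → K) :
    Psi (⇑τ) w v = τ (Psi (⇑τ) v w) := by
  simp only [Psi, map_sum, map_mul, hτ2]
  exact Finset.sum_congr rfl fun i _ => mul_comm _ _

lemma Psi_sub_left (a b w : Fin n → K) :
    Psi (⇑τ) (a - b) w = Psi (⇑τ) a w - Psi (⇑τ) b w := by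
  simp [Psi, sub_mul, Finset.sum_sub_distrib]

lemma Psi_sub_right (a w w' : Fin n → K) :
    Psi (⇑τ) a (w - w') = Psi (⇑τ) a w - Psi (⇑τ) a w' := by
  simp [Psi, mul_sub, Finset.sum_sub_distrib]

lemma Psi_single_right (v : Fin n → K) (i : Fin n) :
    Psi (⇑τ) v (Pi.single i 1) = v i := by
  simp [Psi, Pi.single_apply, apply_ite τ]

lemma eq_zero_of_psi_left (v : Fin n → K) (h : ∀ w, Psi (⇑τ) v w = 0) : v = 0 := by
  funext i
  have := h (Pi.single i 1)
  rwa [Psi_single_right] at this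

lemma eq_zero_of_psi_right (v : Fin n → K) (h : ∀ w, Psi (⇑τ) w v = 0) : v = 0 := by
  funext i
  have := h (Pi.single i 1)
  simp only [Psi, Pi.single_apply, ite_mul, one_mul, zero_mul,
    Finset.sum_ite_eq', Finset.mem_univ, if_true] at this
  have h2 : τ (v i) = τ 0 := by rw [this, map_zero]
  exact τ.injective h2

end Aux


namespace Aux2

open Module

variable (τ : K →+* K) {n : ℕ}

lemma Psi_sum_right {ι : Type*} (v : Fin n → K) (s : Finset ι) (f : ι → (Fin n → K)) :
    Psi (⇑τ) v (∑ i ∈ s, f i) = ∑ i ∈ s, Psi (⇑τ) v (f i) :=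
  map_sum (AddMonoidHom.mk' (fun w => Psi (⇑τ) v w) (Psi_add_right τ v)) f s

lemma perp_le_perp {S T : Submodule K (Fin n → K)} (h : S ≤ T) :
    perp (⇑τ) T ≤ perp (⇑τ) S := fun v hv s hs => hv s (h hs)

lemma mem_perp {S : Submodule K (Fin n → K)} {v : Fin n → K} :
    v ∈ perp (⇑τ) S ↔ ∀ s ∈ S, Psi (⇑τ) v s = 0 := Iff.rfl

lemma finrank_perp (hτ2 : ∀ x, τ (τ x) = x) (X : Submodule K (Fin n → K)) :
    finrank K (perp (⇑τ) X) = n - finrank K X := by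
  classical
  set d := finrank K X with hd
  let b : Basis (Fin d) K X := finBasis K X
  let φ : (Fin n → K) →ₗ[K] (Fin d → K) :=
    { toFun := fun v i => Psi (⇑τ) v (b i)
      map_add' := fun x y => by funext i; exact Psi_add_left (⇑τ) x y (b i)
      map_smul' := fun c x => by funext i; exact Psi_smul_left (⇑τ) c x (b i) }
  have hφ : ∀ v i, φ v i = Psi (⇑τ) v (b i) := fun v i => rfl
  have hker : LinearMap.ker φ = perp (⇑τ) X := by
    ext v
    constructor
    · intro hv s hs
      have hb : ∀ i, Psi (⇑τ) v ((b i : Fin n → K)) = 0 := by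
        intro i
        have := congrFun (LinearMap.mem_ker.mp hv) i
        simpa [hφ] using this
      have hrepr : (⟨s, hs⟩ : X) = ∑ i, (b.repr ⟨s, hs⟩) i • b i := (b.sum_repr ⟨s, hs⟩).symm
      have hs' : s = ∑ i, (b.repr ⟨s, hs⟩) i • (b i : Fin n → K) := by
        simpa only [Submodule.coe_sum, Submodule.coe_smul] using congrArg Subtype.val hrepr
      rw [hs', Psi_sum_right]
      refine Finset.sum_eq_zero fun i _ => ?_
      rw [Psi_smul_right, hb i, mul_zero]
    · intro hv
      rw [LinearMap.mem_ker]
      funext i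
      exact hv (b i) (b i).2
  have hrange : LinearMap.range φ = ⊤ := by
    by_contra hne
    obtain ⟨f, hf0, hfmap⟩ :=
      Submodule.exists_dual_map_eq_bot_of_lt_top (lt_top_iff_ne_top.mpr hne) inferInstance
    set c : Fin d → K := fun i => f (fun j => if i = j then 1 else 0) with hc
    have hfc : ∀ y : Fin d → K, f y = ∑ i, y i * c i := by
      intro y
      rw [LinearMap.pi_apply_eq_sum_univ f y]
      exact Finset.sum_congr rfl fun i _ => by rw [smul_eq_mul]
    have hfv : ∀ v : Fin n → K, f (φ v) = 0 := by
      intro v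
      have : f (φ v) ∈ Submodule.map f (LinearMap.range φ) :=
        Submodule.mem_map_of_mem (LinearMap.mem_range_self φ v)
      rw [hfmap] at this
      exact this
    set t : X := ∑ i, τ (c i) • b i with ht
    have htv : ∀ v : Fin n → K, Psi (⇑τ) v (t : Fin n → K) = 0 := by
      intro v
      have hcoe : (t : Fin n → K) = ∑ i, τ (c i) • (b i : Fin n → K) := by
        rw [ht]; push_cast [Submodule.coe_sum]; rfl
      rw [hcoe, Psi_sum_right]
      have : ∀ i, Psi (⇑τ) v (τ (c i) • (b i : Fin n → K)) = Psi (⇑τ) v (b i) * c i := by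
        intro i
        rw [Psi_smul_right, hτ2]; ring
      rw [Finset.sum_congr rfl fun i _ => this i]
      have hv0 := hfv v
      rw [hfc] at hv0
      simpa [hφ] using hv0
    have ht0 : t = 0 := by
      have : (t : Fin n → K) = 0 := eq_zero_of_psi_right τ _ htv
      exact Subtype.ext this
    have hc0 : ∀ i, c i = 0 := by
      intro i
      have hli := Fintype.linearIndependent_iff.mp b.linearIndependent (fun i => τ (c i))
        (by rw [← ht, ht0]) i
      have := congrArg τ hli
      rwa [hτ2, map_zero] at this
    exact hf0 (LinearMap.ext fun y => by rw [hfc y]; simp [hc0])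
  have hrn := LinearMap.finrank_range_add_finrank_ker φ
  rw [hrange, hker] at hrn
  have htop : finrank K (⊤ : Submodule K (Fin d → K)) = d := by
    rw [finrank_top]; simp
  have hVn : finrank K (Fin n → K) = n := by simp
  have hdn : d ≤ n := hVn ▸ X.finrank_le
  omega

lemma psi_zero_flip (hτ2 : ∀ x, τ (τ x) = x) {v w : Fin n → K}
    (h : Psi (⇑τ) v w = 0) : Psi (⇑τ) w v = 0 := by
  rw [Psi_conj τ hτ2, h, map_zero]

lemma le_biperp (hτ2 : ∀ x, τ (τ x) = x) (X : Submodule K (Fin n → K)) :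
    X ≤ perp (⇑τ) (perp (⇑τ) X) :=
  fun x hx s hs => psi_zero_flip τ hτ2 (hs x hx)

lemma biperp_eq (hτ2 : ∀ x, τ (τ x) = x) (X : Submodule K (Fin n → K)) :
    perp (⇑τ) (perp (⇑τ) X) = X := by
  have hXn : finrank K X ≤ n := by
    have := X.finrank_le
    simpa using this
  refine (Submodule.eq_of_le_of_finrank_le (le_biperp τ hτ2 X) ?_).symm
  rw [finrank_perp τ hτ2, finrank_perp τ hτ2]
  omega

lemma nondeg_perp (hτ2 : ∀ x, τ (τ x) = x) {X : Submodule K (Fin n → K)}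
    (h : Nondeg (⇑τ) X) : Nondeg (⇑τ) (perp (⇑τ) X) := by
  unfold Nondeg at h ⊢
  rw [biperp_eq τ hτ2, inf_comm]
  exact h

lemma exists_anisotropic (hτne : (⇑τ : K → K) ≠ id) (X : Submodule K (Fin n → K))
    (hX : Nondeg (⇑τ) X) (hne : X ≠ ⊥) :
    ∃ v ∈ X, Psi (⇑τ) v v ≠ 0 := by
  by_contra hcon
  push_neg at hcon
  have hiso : ∀ x ∈ X, ∀ y ∈ X, Psi (⇑τ) x y = 0 := by
    intro x hx y hy
    by_contra hz
    have h1 : Psi (⇑τ) y x = - Psi (⇑τ) x y := by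
      have h0 := hcon (x + y) (add_mem hx hy)
      rw [Psi_add_left, Psi_add_right, Psi_add_right, hcon x hx, hcon y hy] at h0
      linear_combination h0
    have h2 : ∀ c : K, τ c = c := by
      intro c
      have h0 := hcon (x + c • y) (add_mem hx (Submodule.smul_mem X c hy))
      rw [Psi_add_left, Psi_add_right, Psi_add_right, hcon x hx, Psi_smul_left,
        Psi_smul_left, Psi_smul_right, Psi_smul_right, hcon y hy, h1] at h0
      have hfac : (τ c - c) * Psi (⇑τ) x y = 0 := by linear_combination h0
      rcases mul_eq_zero.mp hfac with h | h
      · linear_combination h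
      · exact absurd h hz
    exact hτne (funext h2)
  have hle : X ≤ perp (⇑τ) X := fun x hx s hs => hiso x hx s hs
  rw [Nondeg, inf_eq_left.mpr hle] at hX
  exact hne hX

lemma psi_zero_zero (w : Fin n → K) : Psi (⇑τ) (0 : Fin n → K) w = 0 := by
  simp [Psi]

lemma isVertex_span (a : Fin n → K) (ha : Psi (⇑τ) a a ≠ 0) :
    IsVertex (⇑τ) (Submodule.span K {a}) := by
  have ha0 : a ≠ 0 := fun h => ha (by rw [h]; exact psi_zero_zero τ 0)
  refine ⟨finrank_span_singleton ha0, ?_⟩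
  rw [Nondeg, Submodule.eq_bot_iff]
  rintro v ⟨hv1, hv2⟩
  obtain ⟨c, rfl⟩ := Submodule.mem_span_singleton.mp hv1
  have h0 := hv2 a (Submodule.mem_span_singleton_self a)
  rw [Psi_smul_left] at h0
  rcases mul_eq_zero.mp h0 with h | h
  · rw [h, zero_smul]
  · exact absurd h ha

lemma vertex_gen (hτne : (⇑τ : K → K) ≠ id) {S : Submodule K (Fin n → K)}
    (h : IsVertex (⇑τ) S) :
    ∃ u, Psi (⇑τ) u u ≠ 0 ∧ S = Submodule.span K {u} := by
  have hbot : S ≠ ⊥ := by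
    intro hb
    rw [hb] at h
    simp [IsVertex, finrank_bot] at h
  obtain ⟨u, hu, hu0⟩ := exists_anisotropic τ hτne S h.2 hbot
  refine ⟨u, hu0, ?_⟩
  have hle : Submodule.span K {u} ≤ S := Submodule.span_le.mpr (by simp [hu])
  refine (Submodule.eq_of_le_of_finrank_le hle ?_).symm
  rw [h.1, finrank_span_singleton (fun h0 => hu0 (by rw [h0]; exact psi_zero_zero τ 0))]

lemma adj_of_mem_perp (hτ2 : ∀ x, τ (τ x) = x)
    (X : {S : Submodule K (Fin n → K) // IsVertex (⇑τ) S}) (z : Fin n → K)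
    (hz : z ∈ perp (⇑τ) X.1) (hz0 : Psi (⇑τ) z z ≠ 0) :
    (FrameGraph τ hτ2 n).Adj X ⟨Submodule.span K {z}, isVertex_span τ z hz0⟩ := by
  show _ ≠ _ ∧ ∀ s ∈ X.1, ∀ w ∈ _, Psi (⇑τ) s w = 0
  constructor
  · intro hEq
    have hzX : z ∈ X.1 := by
      rw [congrArg Subtype.val hEq]
      exact Submodule.mem_span_singleton_self z
    have : z ∈ X.1 ⊓ perp (⇑τ) X.1 := ⟨hzX, hz⟩
    rw [X.2.2] at this
    exact hz0 (by rw [(Submodule.mem_bot K).mp this]; exact psi_zero_zero τ 0)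
  · intro s hs w hw
    obtain ⟨c, rfl⟩ := Submodule.mem_span_singleton.mp hw
    rw [Psi_smul_right, psi_zero_flip τ hτ2 (hz s hs), mul_zero]

lemma walk_of_common (hτ2 : ∀ x, τ (τ x) = x)
    (S W : {S : Submodule K (Fin n → K) // IsVertex (⇑τ) S}) (z : Fin n → K)
    (hz : z ∈ perp (⇑τ) (S.1 ⊔ W.1)) (hz0 : Psi (⇑τ) z z ≠ 0) :
    ∃ p : (FrameGraph τ hτ2 n).Walk S W, p.length = 4 := by
  have hzS : z ∈ perp (⇑τ) S.1 := perp_le_perp τ le_sup_left hz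
  have hzW : z ∈ perp (⇑τ) W.1 := perp_le_perp τ le_sup_right hz
  have h1 := adj_of_mem_perp τ hτ2 S z hzS hz0
  have h2 := adj_of_mem_perp τ hτ2 W z hzW hz0
  exact ⟨.cons h1 (.cons h1.symm (.cons h1 (.cons h2.symm .nil))), rfl⟩

lemma totally_iso (hτne : (⇑τ : K → K) ≠ id) {P : Submodule K (Fin n → K)}
    (hcon : ∀ v ∈ P, Psi (⇑τ) v v = 0) :
    ∀ x ∈ P, ∀ y ∈ P, Psi (⇑τ) x y = 0 := by
  intro x hx y hy
  by_contra hz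
  have h1 : Psi (⇑τ) y x = - Psi (⇑τ) x y := by
    have h0 := hcon (x + y) (add_mem hx hy)
    rw [Psi_add_left, Psi_add_right, Psi_add_right, hcon x hx, hcon y hy] at h0
    linear_combination h0
  have h2 : ∀ c : K, τ c = c := by
    intro c
    have h0 := hcon (x + c • y) (add_mem hx (Submodule.smul_mem P c hy))
    rw [Psi_add_left, Psi_add_right, Psi_add_right, hcon x hx, Psi_smul_left,
      Psi_smul_left, Psi_smul_right, Psi_smul_right, hcon y hy, h1] at h0
    have hfac : (τ c - c) * Psi (⇑τ) x y = 0 := by linear_combination h0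
    rcases mul_eq_zero.mp hfac with h | h
    · linear_combination h
    · exact absurd h hz
  exact hτne (funext h2)

lemma finrank_sup_le_two {S W : Submodule K (Fin n → K)}
    (hS : finrank K S = 1) (hW : finrank K W = 1) : finrank K ↥(S ⊔ W) ≤ 2 := by
  have h := Submodule.finrank_sup_add_finrank_inf_eq S W
  omega

lemma exists_aniso_perp_of_deg_n4 (hτne : (⇑τ : K → K) ≠ id) (hτ2 : ∀ x, τ (τ x) = x)
    (hn4 : 4 ≤ n) {S W : Submodule K (Fin n → K)}
    (hSv : IsVertex (⇑τ) S) (hWv : IsVertex (⇑τ) W)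
    (hU : ¬ Nondeg (⇑τ) (S ⊔ W)) :
    ∃ z ∈ perp (⇑τ) (S ⊔ W), Psi (⇑τ) z z ≠ 0 := by
  set U := S ⊔ W with hUdef
  have hU2 : finrank K ↥U = 2 := by
    have hle2 : finrank K ↥U ≤ 2 := finrank_sup_le_two hSv.1 hWv.1
    have hge1 : 1 ≤ finrank K ↥U := hSv.1 ▸ Submodule.finrank_mono (le_sup_left : S ≤ U)
    rcases Nat.lt_or_ge (finrank K ↥U) 2 with h | h
    · exfalso
      have hSU : S = U := Submodule.eq_of_le_of_finrank_le le_sup_left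
        (by rw [hSv.1]; omega)
      exact hU (hSU ▸ hSv.2)
    · omega
  by_contra hcon
  push_neg at hcon
  set P := perp (⇑τ) U with hPdef
  have hiso := totally_iso τ hτne hcon
  obtain ⟨u, hu0, hSu⟩ := vertex_gen τ hτne hSv
  have huU : u ∈ U := le_sup_left (α := Submodule K (Fin n → K)) ?huS
  case huS => rw [hSu]; exact Submodule.mem_span_singleton_self u
  have huP : u ∉ P := fun h => hu0 (hcon u h)
  have hPperp : P ≤ perp (⇑τ) P := fun x hx s hs => hiso x hx s hs
  have huperp : u ∈ perp (⇑τ) P := fun p hp => psi_zero_flip τ hτ2 (hp u huU)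
  have hQle : P ⊔ Submodule.span K {u} ≤ perp (⇑τ) P :=
    sup_le hPperp (Submodule.span_le.mpr (by simpa using huperp))
  have hinf : P ⊓ Submodule.span K {u} = ⊥ := by
    rw [Submodule.eq_bot_iff]
    rintro v ⟨hv1, hv2⟩
    obtain ⟨c, rfl⟩ := Submodule.mem_span_singleton.mp hv2
    rcases eq_or_ne c 0 with rfl | hc
    · rw [zero_smul]
    · exact absurd (Submodule.smul_mem P c⁻¹ hv1) (by rwa [inv_smul_smul₀ hc])
  have hu0' : u ≠ 0 := fun h => hu0 (by rw [h]; exact psi_zero_zero τ 0)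
  have hQrank : finrank K ↥(P ⊔ Submodule.span K {u}) = finrank K ↥P + 1 := by
    have h := Submodule.finrank_sup_add_finrank_inf_eq P (Submodule.span K {u})
    rw [hinf, finrank_span_singleton hu0'] at h
    simpa using h
  have hP : finrank K ↥P = n - 2 := by rw [hPdef, finrank_perp τ hτ2, hU2]
  have hPP : finrank K ↥(perp (⇑τ) P) = 2 := by
    rw [finrank_perp τ hτ2, hP]; omega
  have := Submodule.finrank_mono hQle
  rw [hQrank, hPP, hP] at this
  omega
lemma walk_of_nondeg (hτne : (⇑τ : K → K) ≠ id) (hτ2 : ∀ x, τ (τ x) = x) (hn : 3 ≤ n)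
    (S W : {S : Submodule K (Fin n → K) // IsVertex (⇑τ) S})
    (hnd : Nondeg (⇑τ) (S.1 ⊔ W.1)) :
    ∃ p : (FrameGraph τ hτ2 n).Walk S W, p.length = 4 := by
  set U := S.1 ⊔ W.1 with hUdef
  have hU2 : finrank K ↥U ≤ 2 := finrank_sup_le_two S.2.1 W.2.1
  have hPnd : Nondeg (⇑τ) (perp (⇑τ) U) := nondeg_perp τ hτ2 hnd
  have hPrank : finrank K ↥(perp (⇑τ) U) = n - finrank K ↥U := finrank_perp τ hτ2 U
  have hPne : perp (⇑τ) U ≠ ⊥ := by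
    intro hbot
    rw [hbot] at hPrank
    simp only [finrank_bot] at hPrank
    omega
  obtain ⟨z, hz, hz0⟩ := exists_anisotropic τ hτne _ hPnd hPne
  exact walk_of_common τ hτ2 S W z hz hz0

lemma exists_trace_one (hτne : (⇑τ : K → K) ≠ id) (hτ2 : ∀ x, τ (τ x) = x) (t : K)
    (ht : τ t = t) : ∃ μ : K, μ + τ μ = t := by
  have hex : ∃ x : K, x + τ x ≠ 0 := by
    by_contra hall
    push_neg at hall
    have hneg : ∀ x : K, τ x = -x := fun x => by linear_combination hall x
    have h2 : (2 : K) = 0 := by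
      have h1 := hneg 1
      rw [map_one] at h1
      linear_combination h1
    exact hτne (funext fun x => by
      show τ x = x
      rw [hneg x]
      linear_combination (-x) * h2)
  obtain ⟨x, hx⟩ := hex
  set s := x + τ x with hs
  have hsfix : τ s = s := by rw [hs, map_add, hτ2]; ring
  refine ⟨(t / s) * x, ?_⟩
  have hts : τ (t / s) = t / s := by
    rw [div_eq_mul_inv, map_mul, map_inv₀, ht, hsfix]
  rw [map_mul, hts]
  field_simp
  ring

lemma exists_fixed_ne01 (hτne : (⇑τ : K → K) ≠ id) (hτ2 : ∀ x, τ (τ x) = x)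
    (hK : Nat.card K ≠ 4) :
    ∃ c : K, τ c = c ∧ c ≠ 0 ∧ c ≠ 1 := by
  by_contra hcon
  push_neg at hcon
  have hfix : ∀ c : K, τ c = c → c = 0 ∨ c = 1 := fun c hc =>
    or_iff_not_imp_left.mpr (hcon c hc)
  have h2 : (2 : K) = 0 := by
    rcases hfix 2 (by rw [map_ofNat]) with h' | h'
    · exact h'
    · exact absurd (by linear_combination h' : (1:K) = 0) one_ne_zero
  obtain ⟨θ, hθ⟩ : ∃ θ : K, τ θ ≠ θ := by
    by_contra hall
    push_neg at hall
    exact hτne (funext hall)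
  have hθ0 : θ ≠ 0 := fun h => hθ (by rw [h, map_zero])
  have hθ1 : θ ≠ 1 := fun h => hθ (by rw [h, map_one])
  have hθfix : τ θ = θ + 1 := by
    have := hfix (θ + τ θ) (by rw [map_add, hτ2]; ring)
    rcases this with h' | h'
    · exact absurd (by linear_combination h' - θ * h2 : τ θ = θ) hθ
    · linear_combination h' - θ * h2
  have huniv : (Set.univ : Set K) = {0, 1, θ, θ + 1} := by
    ext y
    simp only [Set.mem_univ, Set.mem_insert_iff, Set.mem_singleton_iff, true_iff]
    have hy := hfix (y + τ y) (by rw [map_add, hτ2]; ring)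
    rcases hy with h' | h'
    · have hyfix : τ y = y := by linear_combination h' - y * h2
      rcases hfix y hyfix with h'' | h''
      · exact Or.inl h''
      · exact Or.inr (Or.inl h'')
    · have hyθ : τ (y - θ) = y - θ := by
        rw [map_sub, hθfix]
        linear_combination h' - y * h2
      rcases hfix _ hyθ with h'' | h''
      · exact Or.inr (Or.inr (Or.inl (by linear_combination h'')))
      · exact Or.inr (Or.inr (Or.inr (by linear_combination h'')))
  apply hK
  have hcard : Nat.card K = ({0, 1, θ, θ + 1} : Set K).ncard := by
    rw [← huniv, Set.ncard_univ]
  rw [hcard]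
  have d10 : (1 : K) ≠ 0 := one_ne_zero
  have dθ10 : θ + 1 ≠ 0 := fun h =>
    hθ (by rw [show θ = -1 by linear_combination h, map_neg, map_one])
  have dθ11 : θ + 1 ≠ 1 := fun h => hθ0 (by linear_combination h)
  have dθθ1 : θ ≠ θ + 1 := fun h => one_ne_zero (by linear_combination -h)
  rw [Set.ncard_insert_of_notMem (by simp [d10.symm, hθ0.symm, dθ10.symm]) (Set.toFinite _),
    Set.ncard_insert_of_notMem (by simp [hθ1.symm, dθ11.symm]) (Set.toFinite _),
    Set.ncard_insert_of_notMem (by simp [dθθ1]) (Set.toFinite _),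
    Set.ncard_singleton]

lemma quad_three_roots {a b c : K} (ha : a ≠ 0) {z₀ z₁ z₂ : K}
    (h01 : z₀ ≠ z₁) (h02 : z₀ ≠ z₂) (h12 : z₁ ≠ z₂)
    (e0 : a * z₀ ^ 2 + b * z₀ + c = 0)
    (e1 : a * z₁ ^ 2 + b * z₁ + c = 0)
    (e2 : a * z₂ ^ 2 + b * z₂ + c = 0) : False := by
  have f1 : a * (z₀ + z₁) + b = 0 := by
    have h := sub_ne_zero.mpr h01
    have hm : (z₀ - z₁) * (a * (z₀ + z₁) + b) = 0 := by linear_combination e0 - e1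
    exact (mul_eq_zero.mp hm).resolve_left h
  have f2 : a * (z₀ + z₂) + b = 0 := by
    have h := sub_ne_zero.mpr h02
    have hm : (z₀ - z₂) * (a * (z₀ + z₂) + b) = 0 := by linear_combination e0 - e2
    exact (mul_eq_zero.mp hm).resolve_left h
  have f3 : (z₁ - z₂) * a = 0 := by linear_combination f1 - f2
  rcases mul_eq_zero.mp f3 with h | h
  · exact sub_ne_zero.mpr h12 h
  · exact ha h

lemma hyp_pair (hτne : (⇑τ : K → K) ≠ id) (hτ2 : ∀ x, τ (τ x) = x)
    {P : Submodule K (Fin n → K)} (hP : Nondeg (⇑τ) P) {r : Fin n → K}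
    (hrP : r ∈ P) (hr0 : r ≠ 0) (hrr : Psi (⇑τ) r r = 0) :
    ∃ r' ∈ P, Psi (⇑τ) r r' = 1 ∧ Psi (⇑τ) r' r' = 0 := by
  have hnotperp : r ∉ perp (⇑τ) P := by
    intro h
    have : r ∈ P ⊓ perp (⇑τ) P := ⟨hrP, h⟩
    rw [hP] at this
    exact hr0 ((Submodule.mem_bot K).mp this)
  have hex : ∃ x ∈ P, Psi (⇑τ) r x ≠ 0 := by
    by_contra hall
    push_neg at hall
    exact hnotperp fun s hs => psi_zero_flip τ hτ2 (psi_zero_flip τ hτ2 (hall s hs))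
  obtain ⟨x, hxP, hx0⟩ := hex
  obtain ⟨x', hx'P, hrx'⟩ : ∃ x' ∈ P, Psi (⇑τ) r x' = 1 :=
    ⟨τ (Psi (⇑τ) r x)⁻¹ • x, Submodule.smul_mem P _ hxP,
      by rw [Psi_smul_right, hτ2, inv_mul_cancel₀ hx0]⟩
  obtain ⟨μ, hμ⟩ := exists_trace_one τ hτne hτ2 (Psi (⇑τ) x' x')
    (by rw [← Psi_conj τ hτ2])
  refine ⟨x' - μ • r, Submodule.sub_mem P hx'P (Submodule.smul_mem P μ hrP), ?_, ?_⟩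
  · rw [Psi_sub_right, hrx', Psi_smul_right, hrr, mul_zero, sub_zero]
  · have hx'r : Psi (⇑τ) x' r = 1 := by
      rw [Psi_conj τ hτ2, hrx', map_one]
    have expand : Psi (⇑τ) (x' - μ • r) (x' - μ • r) =
        Psi (⇑τ) x' x' - τ μ * Psi (⇑τ) x' r - μ * Psi (⇑τ) r x'
          + μ * (τ μ * Psi (⇑τ) r r) := by
      rw [Psi_sub_left, Psi_sub_right, Psi_sub_right, Psi_smul_right, Psi_smul_left,
        Psi_smul_left, Psi_smul_right]
      ring
    rw [expand, hrr, hrx', hx'r]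
    linear_combination -hμ
lemma mem_perp_span {v a : Fin n → K} (h : Psi (⇑τ) v a = 0) :
    v ∈ perp (⇑τ) (Submodule.span K {a}) := by
  intro s hs
  obtain ⟨c, rfl⟩ := Submodule.mem_span_singleton.mp hs
  rw [Psi_smul_right, h, mul_zero]

lemma Psi_expand (hτ2 : ∀ x, τ (τ x) = x) (x y z w : Fin n → K) (ca cb : K) :
    Psi (⇑τ) (x + ca • y) (z + cb • w) =
      Psi (⇑τ) x z + τ cb * Psi (⇑τ) x w + ca * Psi (⇑τ) y z
        + ca * (τ cb * Psi (⇑τ) y w) := by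
  simp only [Psi_add_left, Psi_add_right, Psi_smul_left, Psi_smul_right]
  ring

lemma walk_hard (hτne : (⇑τ : K → K) ≠ id) (hτ2 : ∀ x, τ (τ x) = x)
    (hK : Nat.card K ≠ 4)
    (S W : {S : Submodule K (Fin 3 → K) // IsVertex (⇑τ) S})
    (hdeg : ¬ Nondeg (⇑τ) (S.1 ⊔ W.1)) :
    ∃ p : (FrameGraph τ hτ2 3).Walk S W, p.length = 4 := by
  classical
  -- the radical element r
  obtain ⟨r, hrmem, hr0⟩ := Submodule.exists_mem_ne_zero_of_ne_bot hdeg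
  have hrU : r ∈ S.1 ⊔ W.1 := hrmem.1
  have hrperpU : r ∈ perp (⇑τ) (S.1 ⊔ W.1) := hrmem.2
  have hrr : Psi (⇑τ) r r = 0 := hrperpU r hrU
  have hrS : r ∈ perp (⇑τ) S.1 := perp_le_perp τ le_sup_left hrperpU
  have hrW : r ∈ perp (⇑τ) W.1 := perp_le_perp τ le_sup_right hrperpU
  -- hyperbolic partners
  obtain ⟨r', hr'S, hrr', hr'r'⟩ :=
    hyp_pair τ hτne hτ2 (nondeg_perp τ hτ2 S.2.2) hrS hr0 hrr
  obtain ⟨r'', hr''W, hrr'', hr''r''⟩ :=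
    hyp_pair τ hτne hτ2 (nondeg_perp τ hτ2 W.2.2) hrW hr0 hrr
  have hr'r : Psi (⇑τ) r' r = 1 := by rw [Psi_conj τ hτ2, hrr', map_one]
  set γ := Psi (⇑τ) r' r'' with hγdef
  -- scalars
  obtain ⟨θ, hθ1⟩ := exists_trace_one τ hτne hτ2 1 (map_one τ)
  obtain ⟨x₀, hx₀⟩ : ∃ x : K, τ x ≠ x := by
    by_contra hall
    push_neg at hall
    exact hτne (funext hall)
  set d := x₀ - τ x₀ with hddef
  have hd0 : d ≠ 0 := fun h => hx₀ (by rw [hddef] at h; linear_combination -h)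
  have hτd : τ d = -d := by rw [hddef, map_sub, hτ2]; ring
  obtain ⟨c, hcfix, hc0, hc1⟩ := exists_fixed_ne01 τ hτne hτ2 hK
  set e := c * d with hedef
  have he0 : e ≠ 0 := mul_ne_zero hc0 hd0
  have hτe : τ e = -e := by rw [hedef, map_mul, hcfix, hτd]; ring
  have hde : d ≠ e := by
    intro h
    rw [hedef] at h
    have hfac : (c - 1) * d = 0 := by linear_combination -h
    rcases mul_eq_zero.mp hfac with h' | h'
    · exact hc1 (by linear_combination h')
    · exact hd0 h'
  -- choose α
  obtain ⟨α, hα1, hαm⟩ : ∃ α : K, α + τ α = 1 ∧ 1 + α * γ ≠ 0 := by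
    by_cases h : 1 + θ * γ ≠ 0
    · exact ⟨θ, hθ1, h⟩
    · push_neg at h
      refine ⟨θ + d, by rw [map_add, hτd]; linear_combination hθ1, ?_⟩
      intro h2
      have hγ0 : γ = 0 := by
        have : d * γ = 0 := by linear_combination h2 - h
        exact (mul_eq_zero.mp this).resolve_left hd0
      rw [hγ0] at h
      simpa using h
  set m := 1 + α * γ with hmdef
  set Q := α + τ θ * m with hQdef
  set TQ := τ α + θ * τ m with hTQdef
  have hTQ : τ Q = TQ := by rw [hQdef, hTQdef, map_add, map_mul, hτ2]
  have hτm0 : τ m ≠ 0 := fun h => hαm (by rw [hmdef] at *; rw [← hτ2 (1 + α*γ), h, map_zero])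
  -- choose z
  obtain ⟨z, hτz, hzN⟩ : ∃ z : K, τ z = -z ∧ (Q - z * m) * (TQ + z * τ m) ≠ 1 := by
    by_contra hno
    push_neg at hno
    have key : ∀ z : K, τ z = -z → -(m * τ m) * z ^ 2 + (Q * τ m - m * TQ) * z
        + (Q * TQ - 1) = 0 := by
      intro z hz
      have := hno z hz
      linear_combination this
    exact quad_three_roots (a := -(m * τ m)) (by simpa using mul_ne_zero hαm hτm0)
      (show (0:K) ≠ d from fun h => hd0 h.symm)
      (show (0:K) ≠ e from fun h => he0 h.symm) hde
      (key 0 (by simp)) (key d hτd) (key e hτe)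
  set β := θ + z with hβdef
  have hτβ : τ β = τ θ - z := by rw [hβdef, map_add, hτz]; ring
  have hβ1 : β + τ β = 1 := by rw [hτβ, hβdef]; linear_combination hθ1
  -- the vectors a and c'
  set a := r + α • r' with hadef
  set c' := r + β • r'' with hc'def
  have haS : a ∈ perp (⇑τ) S.1 :=
    Submodule.add_mem _ hrS (Submodule.smul_mem _ _ hr'S)
  have hc'W : c' ∈ perp (⇑τ) W.1 :=
    Submodule.add_mem _ hrW (Submodule.smul_mem _ _ hr''W)
  have haa : Psi (⇑τ) a a = 1 := by
    rw [hadef, Psi_expand τ hτ2, hrr, hrr', hr'r, hr'r']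
    linear_combination hα1
  have hcc : Psi (⇑τ) c' c' = 1 := by
    have hr''r : Psi (⇑τ) r'' r = 1 := by rw [Psi_conj τ hτ2, hrr'', map_one]
    rw [hc'def, Psi_expand τ hτ2, hrr, hrr'', hr''r, hr''r'']
    linear_combination hβ1
  have hF : Psi (⇑τ) a c' = Q - z * m := by
    rw [hadef, hc'def, Psi_expand τ hτ2, hrr, hrr'', hr'r, ← hγdef, hτβ, hQdef, hmdef]
    ring
  have hFN : Psi (⇑τ) a c' * τ (Psi (⇑τ) a c') ≠ 1 := by
    rw [hF, map_sub, map_mul, hτz, hTQ]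
    intro h
    exact hzN (by linear_combination h)
  -- the plane spanned by a and c'
  have ha0 : Psi (⇑τ) a a ≠ 0 := by rw [haa]; exact one_ne_zero
  have hc0' : Psi (⇑τ) c' c' ≠ 0 := by rw [hcc]; exact one_ne_zero
  have hane : a ≠ 0 := fun h => ha0 (by rw [h]; exact psi_zero_zero τ 0)
  have hc'ne : c' ≠ 0 := fun h => hc0' (by rw [h]; exact psi_zero_zero τ 0)
  set B2 := Submodule.span K {a} ⊔ Submodule.span K {c'} with hB2def
  have haB2 : a ∈ B2 := le_sup_left (α := Submodule K (Fin 3 → K))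
    (Submodule.mem_span_singleton_self a)
  have hc'B2 : c' ∈ B2 := le_sup_right (α := Submodule K (Fin 3 → K))
    (Submodule.mem_span_singleton_self c')
  have hB2nd : Nondeg (⇑τ) B2 := by
    rw [Nondeg, Submodule.eq_bot_iff]
    rintro v ⟨hv1, hv2⟩
    obtain ⟨va, hva, vc, hvc, rfl⟩ := Submodule.mem_sup.mp hv1
    obtain ⟨s, rfl⟩ := Submodule.mem_span_singleton.mp hva
    obtain ⟨t, rfl⟩ := Submodule.mem_span_singleton.mp hvc
    set F := Psi (⇑τ) a c' with hFdef
    have hca : Psi (⇑τ) c' a = τ F := by rw [hFdef, ← Psi_conj τ hτ2]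
    have e1 : s * 1 + t * τ F = 0 := by
      have := hv2 a haB2
      rw [Psi_add_left, Psi_smul_left, Psi_smul_left, haa, hca] at this
      linear_combination this
    have e2 : s * F + t * 1 = 0 := by
      have := hv2 c' hc'B2
      rw [Psi_add_left, Psi_smul_left, Psi_smul_left, hcc, ← hFdef] at this
      linear_combination this
    have hs0 : s = 0 := by
      have hfac : s * (1 - F * τ F) = 0 := by linear_combination e1 - τ F * e2
      rcases mul_eq_zero.mp hfac with h | h
      · exact h
      · exact absurd (by linear_combination -h) hFN
    have ht0 : t = 0 := by
      rw [hs0] at e2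
      linear_combination e2
    rw [hs0, ht0, zero_smul, zero_smul, add_zero]
  have hB2rank : finrank K ↥B2 ≤ 2 :=
    finrank_sup_le_two (finrank_span_singleton hane) (finrank_span_singleton hc'ne)
  have hPB2nd : Nondeg (⇑τ) (perp (⇑τ) B2) := nondeg_perp τ hτ2 hB2nd
  have hPB2ne : perp (⇑τ) B2 ≠ ⊥ := by
    intro hbot
    have := finrank_perp τ hτ2 B2
    rw [hbot] at this
    simp only [finrank_bot] at this
    omega
  obtain ⟨b, hbB2, hb0⟩ := exists_anisotropic τ hτne _ hPB2nd hPB2ne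
  have hba : Psi (⇑τ) b a = 0 := hbB2 a haB2
  have hbc : Psi (⇑τ) b c' = 0 := hbB2 c' hc'B2
  -- assemble the walk
  have e1 := adj_of_mem_perp τ hτ2 S a haS ha0
  have e2 := adj_of_mem_perp τ hτ2 ⟨Submodule.span K {a}, isVertex_span τ a ha0⟩ b
    (mem_perp_span τ hba) hb0
  have e3 := adj_of_mem_perp τ hτ2 ⟨Submodule.span K {b}, isVertex_span τ b hb0⟩ c'
    (mem_perp_span τ (psi_zero_flip τ hτ2 hbc)) hc0'
  have e4 := adj_of_mem_perp τ hτ2 W c' hc'W hc0'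
  exact ⟨.cons e1 (.cons e2 (.cons e3 (.cons e4.symm .nil))), rfl⟩
lemma nondeg_pair (hτ2 : ∀ x, τ (τ x) = x) {u w : Fin n → K}
    (hu : Psi (⇑τ) u u ≠ 0) (hw : Psi (⇑τ) w w ≠ 0) (hwu : Psi (⇑τ) w u = 0) :
    Nondeg (⇑τ) (Submodule.span K {u} ⊔ Submodule.span K {w}) := by
  have huw : Psi (⇑τ) u w = 0 := psi_zero_flip τ hτ2 hwu
  rw [Nondeg, Submodule.eq_bot_iff]
  rintro v ⟨hv1, hv2⟩
  obtain ⟨va, hva, vc, hvc, rfl⟩ := Submodule.mem_sup.mp hv1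
  obtain ⟨a1, rfl⟩ := Submodule.mem_span_singleton.mp hva
  obtain ⟨a2, rfl⟩ := Submodule.mem_span_singleton.mp hvc
  have e1 := hv2 u (le_sup_left (α := Submodule K (Fin n → K))
    (Submodule.mem_span_singleton_self u))
  have e2 := hv2 w (le_sup_right (α := Submodule K (Fin n → K))
    (Submodule.mem_span_singleton_self w))
  rw [Psi_add_left, Psi_smul_left, Psi_smul_left, hwu] at e1
  rw [Psi_add_left, Psi_smul_left, Psi_smul_left, huw] at e2
  have ha1 : a1 = 0 := by
    have : a1 * Psi (⇑τ) u u = 0 := by linear_combination e1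
    exact (mul_eq_zero.mp this).resolve_right hu
  have ha2 : a2 = 0 := by
    have : a2 * Psi (⇑τ) w w = 0 := by linear_combination e2
    exact (mul_eq_zero.mp this).resolve_right hw
  rw [ha1, ha2, zero_smul, zero_smul, add_zero]

lemma f4_fixed01 (hτne : (⇑τ : K → K) ≠ id) (hτ2 : ∀ x, τ (τ x) = x)
    (hK : Nat.card K = 4) :
    ∀ c : K, τ c = c → c = 0 ∨ c = 1 := by
  intro c hcfix
  by_contra hcon
  push_neg at hcon
  obtain ⟨hc0, hc1⟩ := hcon
  obtain ⟨θ, hθ⟩ : ∃ θ : K, τ θ ≠ θ := by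
    by_contra hall
    push_neg at hall
    exact hτne (funext hall)
  have hnotk : ∀ x y : K, τ x = x → τ y = y → θ + x ≠ y := by
    intro x y hx hy h
    exact hθ (by rw [show θ = y - x by linear_combination h, map_sub, hx, hy])
  have h0f : τ (0:K) = 0 := map_zero τ
  have h1f : τ (1:K) = 1 := map_one τ
  have hs : ({0, 1, c, θ, θ + 1, θ + c} : Set K).ncard = 6 := by
    have m0 : (0:K) ∉ ({1, c, θ, θ + 1, θ + c} : Set K) := by
      simp only [Set.mem_insert_iff, Set.mem_singleton_iff]
      push_neg
      refine ⟨fun h => one_ne_zero h.symm, fun h => hc0 h.symm,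
        fun h => hnotk 0 0 h0f h0f (by rw [add_zero, ← h]),
        fun h => hnotk 1 0 h1f h0f (by rw [← h]),
        fun h => hnotk c 0 hcfix h0f (by rw [← h])⟩
    have m1 : (1:K) ∉ ({c, θ, θ + 1, θ + c} : Set K) := by
      simp only [Set.mem_insert_iff, Set.mem_singleton_iff]
      push_neg
      refine ⟨fun h => hc1 h.symm,
        fun h => hnotk 0 1 h0f h1f (by rw [add_zero, ← h]),
        fun h => hnotk 1 1 h1f h1f (by rw [← h]),
        fun h => hnotk c 1 hcfix h1f (by rw [← h])⟩
    have m2 : c ∉ ({θ, θ + 1, θ + c} : Set K) := by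
      simp only [Set.mem_insert_iff, Set.mem_singleton_iff]
      push_neg
      refine ⟨fun h => hnotk 0 c h0f hcfix (by rw [add_zero, ← h]),
        fun h => hnotk 1 c h1f hcfix (by rw [← h]),
        fun h => hnotk c c hcfix hcfix (by rw [← h])⟩
    have m3 : θ ∉ ({θ + 1, θ + c} : Set K) := by
      simp only [Set.mem_insert_iff, Set.mem_singleton_iff]
      push_neg
      constructor
      · intro h
        exact one_ne_zero (by linear_combination -h)
      · intro h
        exact hc0 (by linear_combination -h)
    have m4 : θ + 1 ∉ ({θ + c} : Set K) := by
      simp only [Set.mem_singleton_iff]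
      intro h
      exact hc1 (by linear_combination -h)
    rw [Set.ncard_insert_of_notMem m0 (Set.toFinite _),
      Set.ncard_insert_of_notMem m1 (Set.toFinite _),
      Set.ncard_insert_of_notMem m2 (Set.toFinite _),
      Set.ncard_insert_of_notMem m3 (Set.toFinite _),
      Set.ncard_insert_of_notMem m4 (Set.toFinite _),
      Set.ncard_singleton]
  have hle : ({0, 1, c, θ, θ + 1, θ + c} : Set K).ncard ≤ Nat.card K := by
    rw [← Set.ncard_univ]
    refine Set.ncard_le_ncard (Set.subset_univ _) ?_
    have : Finite K := Nat.finite_of_card_ne_zero (by omega)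
    exact Set.toFinite _
  omega

lemma f4_char2 (hτne : (⇑τ : K → K) ≠ id) (hτ2 : ∀ x, τ (τ x) = x)
    (hK : Nat.card K = 4) : (2 : K) = 0 := by
  rcases f4_fixed01 τ hτne hτ2 hK 2 (by rw [map_ofNat]) with h | h
  · exact h
  · exact absurd (by linear_combination h : (1:K) = 0) one_ne_zero

lemma f4_norm_one (hτne : (⇑τ : K → K) ≠ id) (hτ2 : ∀ x, τ (τ x) = x)
    (hK : Nat.card K = 4) {x : K} (hx : x ≠ 0) : x * τ x = 1 := by
  have hfix : τ (x * τ x) = x * τ x := by rw [map_mul, hτ2]; ring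
  rcases f4_fixed01 τ hτne hτ2 hK _ hfix with h | h
  · exfalso
    rcases mul_eq_zero.mp h with h' | h'
    · exact hx h'
    · exact hx (by rw [← hτ2 x, h', map_zero])
  · exact h

lemma f4_closure (hτne : (⇑τ : K → K) ≠ id) (hτ2 : ∀ x, τ (τ x) = x)
    (hK : Nat.card K = 4) {x₀ x₁ x₂ : Fin 3 → K}
    (h₀ : Psi (⇑τ) x₀ x₀ ≠ 0) (h₁ : Psi (⇑τ) x₁ x₁ ≠ 0) (h₂ : Psi (⇑τ) x₂ x₂ ≠ 0)
    (h01 : Psi (⇑τ) x₀ x₁ = 0) (h02 : Psi (⇑τ) x₀ x₂ = 0) (h12 : Psi (⇑τ) x₁ x₂ = 0)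
    (X Y : {S : Submodule K (Fin 3 → K) // IsVertex (⇑τ) S})
    (hX : X.1 = Submodule.span K {x₀}) (hadj : (FrameGraph τ hτ2 3).Adj X Y) :
    Y.1 = Submodule.span K {x₁} ∨ Y.1 = Submodule.span K {x₂} := by
  obtain ⟨y, hy0, hYspan⟩ := vertex_gen τ hτne Y.2
  have hyne : y ≠ 0 := fun h => hy0 (by rw [h]; exact psi_zero_zero τ 0)
  have hx₀y : Psi (⇑τ) x₀ y = 0 :=
    (id hadj : X ≠ Y ∧ ∀ s ∈ X.1, ∀ w ∈ Y.1, Psi (⇑τ) s w = 0).2 x₀ (by rw [hX]; exact Submodule.mem_span_singleton_self x₀) y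
      (by rw [hYspan]; exact Submodule.mem_span_singleton_self y)
  have hyx₀ : Psi (⇑τ) y x₀ = 0 := psi_zero_flip τ hτ2 hx₀y
  -- perp of span x₀ equals span x₁ ⊔ span x₂
  have hx1ne : x₁ ≠ 0 := fun h => h₁ (by rw [h]; exact psi_zero_zero τ 0)
  have hx2ne : x₂ ≠ 0 := fun h => h₂ (by rw [h]; exact psi_zero_zero τ 0)
  have hx0ne : x₀ ≠ 0 := fun h => h₀ (by rw [h]; exact psi_zero_zero τ 0)
  have hsup_le : Submodule.span K {x₁} ⊔ Submodule.span K {x₂} ≤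
      perp (⇑τ) (Submodule.span K {x₀}) :=
    sup_le (Submodule.span_le.mpr (by
        simp only [Set.singleton_subset_iff, SetLike.mem_coe]
        exact mem_perp_span τ (psi_zero_flip τ hτ2 h01)))
      (Submodule.span_le.mpr (by
        simp only [Set.singleton_subset_iff, SetLike.mem_coe]
        exact mem_perp_span τ (psi_zero_flip τ hτ2 h02)))
  have hinf : Submodule.span K {x₁} ⊓ Submodule.span K {x₂} = ⊥ := by
    rw [Submodule.eq_bot_iff]
    rintro v ⟨hv1, hv2⟩
    obtain ⟨k, rfl⟩ := Submodule.mem_span_singleton.mp hv1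
    rcases eq_or_ne k 0 with rfl | hk
    · rw [zero_smul]
    · exfalso
      have hx1mem : x₁ ∈ Submodule.span K {x₂} := by
        have := Submodule.smul_mem _ k⁻¹ hv2
        rwa [inv_smul_smul₀ hk] at this
      obtain ⟨l, hl⟩ := Submodule.mem_span_singleton.mp hx1mem
      have h1val : Psi (⇑τ) x₁ x₂ = l * Psi (⇑τ) x₂ x₂ := by
        rw [← hl, Psi_smul_left]
      rw [h12] at h1val
      rcases mul_eq_zero.mp h1val.symm with h' | h'
      · exact hx1ne (by rw [← hl, h', zero_smul])
      · exact h₂ h'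
  have hsup_rank : finrank K ↥(Submodule.span K {x₁} ⊔ Submodule.span K {x₂}) = 2 := by
    have h := Submodule.finrank_sup_add_finrank_inf_eq
      (Submodule.span K {x₁}) (Submodule.span K {x₂})
    rw [hinf, finrank_span_singleton hx1ne, finrank_span_singleton hx2ne] at h
    simpa using h
  have hperp_rank : finrank K ↥(perp (⇑τ) (Submodule.span K {x₀})) = 2 := by
    rw [finrank_perp τ hτ2, finrank_span_singleton hx0ne]
  have hperp_eq : Submodule.span K {x₁} ⊔ Submodule.span K {x₂} =
      perp (⇑τ) (Submodule.span K {x₀}) :=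
    Submodule.eq_of_le_of_finrank_le hsup_le (by rw [hsup_rank, hperp_rank])
  have hy_mem : y ∈ Submodule.span K {x₁} ⊔ Submodule.span K {x₂} := by
    rw [hperp_eq]
    exact mem_perp_span τ hyx₀
  obtain ⟨v1, hv1, v2, hv2, hy_eq⟩ := Submodule.mem_sup.mp hy_mem
  obtain ⟨s, rfl⟩ := Submodule.mem_span_singleton.mp hv1
  obtain ⟨t, rfl⟩ := Submodule.mem_span_singleton.mp hv2
  -- norms of x₁, x₂ are 1
  have hn1 : Psi (⇑τ) x₁ x₁ = 1 := by
    rcases f4_fixed01 τ hτne hτ2 hK (Psi (⇑τ) x₁ x₁)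
        (by rw [← Psi_conj τ hτ2]) with h | h
    · exact absurd h h₁
    · exact h
  have hn2 : Psi (⇑τ) x₂ x₂ = 1 := by
    rcases f4_fixed01 τ hτne hτ2 hK (Psi (⇑τ) x₂ x₂)
        (by rw [← Psi_conj τ hτ2]) with h | h
    · exact absurd h h₂
    · exact h
  have h21 : Psi (⇑τ) x₂ x₁ = 0 := psi_zero_flip τ hτ2 h12
  have hyy : Psi (⇑τ) y y = s * τ s + t * τ t := by
    rw [← hy_eq]
    simp only [Psi_add_left, Psi_add_right, Psi_smul_left, Psi_smul_right,
      hn1, hn2, h12, h21]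
    ring
  rcases eq_or_ne s 0 with rfl | hs
  · right
    have ht : t ≠ 0 := by
      intro h
      rw [h] at hy_eq
      simp only [zero_smul, add_zero] at hy_eq
      exact hyne hy_eq.symm
    rw [hYspan, show y = t • x₂ by rw [← hy_eq, zero_smul, zero_add]]
    exact Submodule.span_singleton_smul_eq (IsUnit.mk0 t ht) x₂
  · rcases eq_or_ne t 0 with rfl | ht
    · left
      rw [hYspan, show y = s • x₁ by rw [← hy_eq, zero_smul, add_zero]]
      exact Submodule.span_singleton_smul_eq (IsUnit.mk0 s hs) x₁
    · exfalso
      apply hy0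
      rw [hyy, f4_norm_one τ hτne hτ2 hK hs, f4_norm_one τ hτne hτ2 hK ht]
      linear_combination f4_char2 τ hτne hτ2 hK
lemma f4_forward (hτne : (⇑τ : K → K) ≠ id) (hτ2 : ∀ x, τ (τ x) = x)
    (hK : Nat.card K = 4)
    (S W : {S : Submodule K (Fin 3 → K) // IsVertex (⇑τ) S})
    (p : (FrameGraph τ hτ2 3).Walk S W) :
    Nondeg (⇑τ) (S.1 ⊔ W.1) := by
  classical
  obtain ⟨u, hu0, hSu⟩ := vertex_gen τ hτne S.2
  have huS : u ∈ S.1 := by rw [hSu]; exact Submodule.mem_span_singleton_self u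
  -- a second frame vector
  have hPnd : Nondeg (⇑τ) (perp (⇑τ) S.1) := nondeg_perp τ hτ2 S.2.2
  have hPne : perp (⇑τ) S.1 ≠ ⊥ := by
    intro hbot
    have h := finrank_perp τ hτ2 S.1
    rw [hbot, S.2.1] at h
    simp only [finrank_bot] at h
    omega
  obtain ⟨a', haP, ha0⟩ := exists_anisotropic τ hτne _ hPnd hPne
  have hau : Psi (⇑τ) a' u = 0 := haP u huS
  have hane : a' ≠ 0 := fun h => ha0 (by rw [h]; exact psi_zero_zero τ 0)
  have hune : u ≠ 0 := fun h => hu0 (by rw [h]; exact psi_zero_zero τ 0)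
  -- third frame vector
  have hTnd : Nondeg (⇑τ) (Submodule.span K {u} ⊔ Submodule.span K {a'}) :=
    nondeg_pair τ hτ2 hu0 ha0 hau
  have hTperp_ne : perp (⇑τ) (Submodule.span K {u} ⊔ Submodule.span K {a'}) ≠ ⊥ := by
    intro hbot
    have h := finrank_perp τ hτ2 (Submodule.span K {u} ⊔ Submodule.span K {a'})
    have hT2 : finrank K ↥(Submodule.span K {u} ⊔ Submodule.span K {a'}) ≤ 2 :=
      finrank_sup_le_two (finrank_span_singleton hune) (finrank_span_singleton hane)
    rw [hbot] at h
    simp only [finrank_bot] at h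
    omega
  obtain ⟨b', hbP, hb0⟩ := exists_anisotropic τ hτne _ (nondeg_perp τ hτ2 hTnd) hTperp_ne
  have hbu : Psi (⇑τ) b' u = 0 := hbP u (le_sup_left (α := Submodule K (Fin 3 → K))
    (Submodule.mem_span_singleton_self u))
  have hba : Psi (⇑τ) b' a' = 0 := hbP a' (le_sup_right (α := Submodule K (Fin 3 → K))
    (Submodule.mem_span_singleton_self a'))
  set F : Set (Submodule K (Fin 3 → K)) :=
    {Submodule.span K {u}, Submodule.span K {a'}, Submodule.span K {b'}} with hFdef
  have hclosed : ∀ X Y : {S : Submodule K (Fin 3 → K) // IsVertex (⇑τ) S},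
      (FrameGraph τ hτ2 3).Adj X Y → X.1 ∈ F → Y.1 ∈ F := by
    intro X Y hadj hX
    simp only [hFdef, Set.mem_insert_iff, Set.mem_singleton_iff] at hX ⊢
    rcases hX with h | h | h
    · rcases f4_closure τ hτne hτ2 hK hu0 ha0 hb0 (psi_zero_flip τ hτ2 hau)
        (psi_zero_flip τ hτ2 hbu) (psi_zero_flip τ hτ2 hba) X Y h hadj with h' | h'
      · exact Or.inr (Or.inl h')
      · exact Or.inr (Or.inr h')
    · rcases f4_closure τ hτne hτ2 hK ha0 hu0 hb0 hau
        (psi_zero_flip τ hτ2 hba) (psi_zero_flip τ hτ2 hbu) X Y h hadj with h' | h'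
      · exact Or.inl h'
      · exact Or.inr (Or.inr h')
    · rcases f4_closure τ hτne hτ2 hK hb0 hu0 ha0 hbu hba
        (psi_zero_flip τ hτ2 hau) X Y h hadj with h' | h'
      · exact Or.inl h'
      · exact Or.inr (Or.inl h')
  have hwalk : ∀ {A B : {S : Submodule K (Fin 3 → K) // IsVertex (⇑τ) S}}
      (_ : (FrameGraph τ hτ2 3).Walk A B), A.1 ∈ F → B.1 ∈ F := by
    intro A B q
    induction q with
    | nil => exact id
    | cons hadj q ih => exact fun h => ih (hclosed _ _ hadj h)
  have hWF : W.1 ∈ F := hwalk p (by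
    simp only [hFdef, Set.mem_insert_iff, Set.mem_singleton_iff]
    exact Or.inl hSu)
  simp only [hFdef, Set.mem_insert_iff, Set.mem_singleton_iff] at hWF
  rcases hWF with h | h | h
  · rw [h, ← hSu, sup_idem]
    exact S.2.2
  · rw [hSu, h]
    exact hTnd
  · rw [hSu, h]
    exact nondeg_pair τ hτ2 hu0 hb0 hbu
end Aux2


/-- For `n ≥ 3`, under condition (ON), for any vertices `S, W` of `G(V)`,
there is a walk of length `4` from `S` to `W` iff `K` does not have exactly `4` elements,
or `n ≠ 3`, or `S + W` is non-degenerate. -/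
theorem statement5 (τ : K →+* K) (hτne : (⇑τ : K → K) ≠ id) (hτ2 : ∀ x, τ (τ x) = x)
    (n : ℕ) (hn : 3 ≤ n)
    (hON : ∀ v : Fin n → K, ∃ x : K, Psi (⇑τ) v v = x * τ x)
    (S W : {S : Submodule K (Fin n → K) // IsVertex (⇑τ) S}) :
    (∃ p : (FrameGraph τ hτ2 n).Walk S W, p.length = 4) ↔
      (Nat.card K ≠ 4 ∨ n ≠ 3 ∨ Nondeg (⇑τ) (S.1 ⊔ W.1)) := by
  constructor
  · rintro ⟨p, _⟩
    by_cases hc4 : Nat.card K = 4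
    · by_cases hn3 : n = 3
      · subst hn3
        exact Or.inr (Or.inr (Aux2.f4_forward τ hτne hτ2 hc4 S W p))
      · exact Or.inr (Or.inl hn3)
    · exact Or.inl hc4
  · intro hrhs
    by_cases hnd : Nondeg (⇑τ) (S.1 ⊔ W.1)
    · exact Aux2.walk_of_nondeg τ hτne hτ2 hn S W hnd
    · by_cases hn3 : n = 3
      · subst hn3
        have hK : Nat.card K ≠ 4 := by
          rcases hrhs with h | h | h
          · exact h
          · exact absurd rfl h
          · exact absurd h hnd
        exact Aux2.walk_hard τ hτne hτ2 hK S W hnd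
      · have hn4 : 4 ≤ n := by omega
        obtain ⟨z, hz, hz0⟩ :=
          Aux2.exists_aniso_perp_of_deg_n4 τ hτne hτ2 hn4 S.2 W.2 hnd
        exact Aux2.walk_of_common τ hτ2 S W z hz hz0

end FramePaper
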